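/- For m coprime to ℓ, the substitution x ↦ x^m induces a ring automorphism of F_q[x]/(x^ℓ - 1); consequently the codes GB(a,b) and GB(a', b') with a'(x) = a(x^m) mod (x^ℓ-1) and b'(x) = b(x^m) mod (x^ℓ-1) have equal dimension and equal minimum distance. -/

import Mathlib

open Polynomial Matrix

/-- The `ℓ × ℓ` cyclic permutation matrix `P` with `P eᵢ = e_{i+1 mod ℓ}`. -/
def cyclicP (F : Type*) [Semiring F] (n : ℕ) [NeZero n] : Matrix (Fin n) (Fin n) F :=
  Matrix.of fun i j => if i = j + 1 then 1 else 0

/-- Hamming weight of a vector. -/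
noncomputable def hWt {n F : Type*} [Zero F] (c : n → F) : ℕ := Set.ncard {i | c i ≠ 0}

/-- The X-check matrix `H_X = (a(P) | b(P))` of the GB code `GB(a,b)`. -/
noncomputable def GBHX (F : Type*) [Field F] (ℓ : ℕ) [NeZero ℓ] (a b : Polynomial F) :
    Matrix (Fin ℓ) (Fin ℓ ⊕ Fin ℓ) F :=
  Matrix.fromCols (Polynomial.aeval (cyclicP F ℓ) a) (Polynomial.aeval (cyclicP F ℓ) b)

/-- The Z-check matrix `H_Z = (b(P)ᵀ | -a(P)ᵀ)` of the GB code `GB(a,b)`. -/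
noncomputable def GBHZ (F : Type*) [Field F] (ℓ : ℕ) [NeZero ℓ] (a b : Polynomial F) :
    Matrix (Fin ℓ) (Fin ℓ ⊕ Fin ℓ) F :=
  Matrix.fromCols ((Polynomial.aeval (cyclicP F ℓ) b)ᵀ) (-(Polynomial.aeval (cyclicP F ℓ) a)ᵀ)

/-- Minimum distance of the CSS code with check matrices `H_X`, `H_Z`: the least Hamming
weight of a vector that satisfies all checks of one type but is not a linear combination
of the rows of the corresponding check matrix. -/
noncomputable def distCSS {F : Type*} [Field F] {q m1 m2 : Type*} [Fintype q]
    (HX : Matrix m1 q F) (HZ : Matrix m2 q F) : ℕ :=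
  sInf ({w | ∃ c : q → F, HX.mulVec c = 0 ∧
          c ∉ Submodule.span F (Set.range fun i => HZ i) ∧ w = hWt c} ∪
        {w | ∃ c : q → F, HZ.mulVec c = 0 ∧
          c ∉ Submodule.span F (Set.range fun i => HX i) ∧ w = hWt c})

/-- Number of logical qudits of the GB code `GB(a,b)`. -/
noncomputable def gbDim (F : Type*) [Field F] (ℓ : ℕ) [NeZero ℓ] (a b : Polynomial F) : ℕ :=
  2 * ℓ - (GBHX F ℓ a b).rank - (GBHZ F ℓ a b).rank

/-- Minimum distance of the GB code `GB(a,b)`. -/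
noncomputable def gbDist (F : Type*) [Field F] (ℓ : ℕ) [NeZero ℓ] (a b : Polynomial F) : ℕ :=
  distCSS (GBHX F ℓ a b) (GBHZ F ℓ a b)


open Fin.NatCast

set_option linter.unusedSectionVars false
set_option maxHeartbeats 1000000

section Aux
variable {F : Type*} [Field F] {ℓ : ℕ}



lemma auxDvd {j k : ℕ} (h : j ≡ k [MOD ℓ]) :
    ((X : Polynomial F) ^ ℓ - 1) ∣ X ^ j - X ^ k := by
  wlog hkj : k ≤ j generalizing j k
  · have := this h.symm (le_of_not_ge hkj)
    simpa using this.neg_right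
  obtain ⟨t, ht⟩ := (Nat.modEq_iff_dvd' hkj).mp h.symm
  have hj : j = k + ℓ * t := by omega
  subst hj
  have : (X : Polynomial F) ^ (k + ℓ * t) - X ^ k = X ^ k * ((X ^ ℓ) ^ t - 1 ^ t) := by
    ring
  rw [this]
  exact Dvd.dvd.mul_left (sub_dvd_pow_sub_pow _ _ t) _

lemma auxCompDvd {k : ℕ} (hk : k ≡ 1 [MOD ℓ]) (p : Polynomial F) :
    ((X : Polynomial F) ^ ℓ - 1) ∣ p.comp (X ^ k) - p := by
  induction p using Polynomial.induction_on' with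
  | add p q hp hq =>
    have : (p + q).comp (X ^ k) - (p + q) = (p.comp (X ^ k) - p) + (q.comp (X ^ k) - q) := by
      simp [add_comp]; ring
    rw [this]; exact dvd_add hp hq
  | monomial n a =>
    rw [← Polynomial.C_mul_X_pow_eq_monomial]
    have : (C a * X ^ n).comp (X ^ k) - C a * X ^ n = C a * (X ^ (n * k) - X ^ n) := by
      simp [mul_comp, pow_comp, ← pow_mul]; ring
    rw [this]
    exact Dvd.dvd.mul_left (auxDvd (by simpa using hk.mul_left n)) _

noncomputable def subE (F : Type*) [Field F] (ℓ : ℕ) (k : ℕ) :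
    (Polynomial F ⧸ Ideal.span {(X : Polynomial F) ^ ℓ - 1}) →+*
    (Polynomial F ⧸ Ideal.span {(X : Polynomial F) ^ ℓ - 1}) :=
  Ideal.Quotient.lift _
    ((Ideal.Quotient.mk (Ideal.span {(X : Polynomial F) ^ ℓ - 1})).comp
      ((aeval ((X : Polynomial F) ^ k)).toRingHom))
    (by
      intro p hp
      rw [Ideal.mem_span_singleton] at hp
      obtain ⟨q, rfl⟩ := hp
      simp only [RingHom.comp_apply, AlgHom.toRingHom_eq_coe, RingHom.coe_coe,
        ← comp_eq_aeval, mul_comp, sub_comp, pow_comp, X_comp, one_comp]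
      rw [Ideal.Quotient.eq_zero_iff_mem, Ideal.mem_span_singleton, ← pow_mul]
      exact Dvd.dvd.mul_right
        (by simpa using (auxDvd (F := F) (ℓ := ℓ) (j := k * ℓ) (k := 0)
          (by simp [Nat.ModEq, Nat.mul_mod_left]))) _)

lemma subE_mk (F : Type*) [Field F] (ℓ k : ℕ) (p : Polynomial F) :
    subE F ℓ k (Ideal.Quotient.mk _ p) = Ideal.Quotient.mk _ (p.comp (X ^ k)) := rfl

lemma subE_comp_subE (F : Type*) [Field F] (ℓ : ℕ) [NeZero ℓ] (k k' : ℕ)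
    (h : k * k' ≡ 1 [MOD ℓ]) :
    ∀ x, subE F ℓ k' (subE F ℓ k x) = x := by
  intro x
  obtain ⟨p, rfl⟩ := Ideal.Quotient.mk_surjective x
  rw [subE_mk, subE_mk, Polynomial.comp_assoc, pow_comp, X_comp, ← pow_mul, mul_comm k' k]
  rw [Ideal.Quotient.mk_eq_mk_iff_sub_mem, Ideal.mem_span_singleton]
  exact auxCompDvd h p

lemma exists_sigma (F : Type*) [Field F] (ℓ : ℕ) [NeZero ℓ] (m : ℕ) (hm : Nat.Coprime m ℓ) :
    ∃ σ : (Polynomial F ⧸ Ideal.span {(X : Polynomial F) ^ ℓ - 1}) ≃+*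
        (Polynomial F ⧸ Ideal.span {(X : Polynomial F) ^ ℓ - 1}),
      ∀ p : Polynomial F,
        σ (Ideal.Quotient.mk (Ideal.span {(X : Polynomial F) ^ ℓ - 1}) p) =
          Ideal.Quotient.mk (Ideal.span {(X : Polynomial F) ^ ℓ - 1}) (p.comp (X ^ m)) := by
  have hφ : 1 ≤ Nat.totient ℓ := (Nat.totient_pos.mpr (Nat.pos_of_ne_zero (NeZero.ne ℓ)))
  set m' := m ^ (Nat.totient ℓ - 1) with hm'
  have hmm' : m * m' ≡ 1 [MOD ℓ] := by
    have : m * m' = m ^ Nat.totient ℓ := by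
      rw [hm', ← pow_succ']
      congr 1
      omega
    rw [this]
    exact Nat.ModEq.pow_totient hm
  refine ⟨{ toFun := subE F ℓ m, invFun := subE F ℓ m',
            left_inv := subE_comp_subE F ℓ m m' hmm',
            right_inv := subE_comp_subE F ℓ m' m (by rwa [mul_comm] at hmm'),
            map_mul' := map_mul _, map_add' := map_add _ }, fun p => rfl⟩



variable [NeZero ℓ]

lemma cyclicP_pow (k : ℕ) :
    (cyclicP F ℓ) ^ k = Matrix.of fun i j => if i = j + (k : Fin ℓ) then 1 else 0 := by
  induction k with
  | zero => ext i j; simp [Matrix.one_apply, eq_comm]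
  | succ k ih =>
    ext i j
    rw [pow_succ, ih]
    simp only [Matrix.mul_apply, Matrix.of_apply, cyclicP, ite_mul, one_mul, zero_mul]
    have hsw : ∀ x : Fin ℓ, (if i = x + (k : Fin ℓ) then (if x = j + 1 then (1:F) else 0) else 0)
        = (if x = j + 1 then (if i = x + (k : Fin ℓ) then (1:F) else 0) else 0) := by
      intro x; split_ifs <;> rfl
    rw [Finset.sum_congr rfl (fun x _ => hsw x),
      Finset.sum_ite_eq' Finset.univ (j + 1) (fun l => if i = l + (k : Fin ℓ) then (1:F) else 0)]
    simp only [Finset.mem_univ, if_true]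

    have : j + ((k : Fin ℓ) + 1) = j + 1 + (k : Fin ℓ) := by
      rw [add_assoc, add_comm (k : Fin ℓ) 1, ← add_assoc]
    simp [Nat.cast_add, this]

lemma cyclicP_pow_self : (cyclicP F ℓ) ^ ℓ = 1 := by
  rw [cyclicP_pow]
  ext i j
  simp [Matrix.one_apply, Fin.natCast_self]

lemma fin_cast_eq_of_modEq {a b : ℕ} (h : a ≡ b [MOD ℓ]) : (a : Fin ℓ) = (b : Fin ℓ) := by
  exact Fin.ext (by simp only [Fin.val_natCast]; exact h)

/-- multiplication by the inverse of `m` as an equiv, given `m*m' ≡ 1 mod ℓ`. -/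
def mulEquiv (m m' : ℕ) (h : ((m : Fin ℓ)) * (m' : Fin ℓ) = 1) : Fin ℓ ≃ Fin ℓ where
  toFun t := (m' : Fin ℓ) * t
  invFun t := (m : Fin ℓ) * t
  left_inv t := by show (m : Fin ℓ) * ((m' : Fin ℓ) * t) = t; rw [← mul_assoc, h, one_mul]
  right_inv t := by
    show (m' : Fin ℓ) * ((m : Fin ℓ) * t) = t
    rw [← mul_assoc, mul_comm (m' : Fin ℓ), h, one_mul]

lemma cyclicP_submatrix (m m' : ℕ) (h : ((m : Fin ℓ)) * (m' : Fin ℓ) = 1) :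
    (cyclicP F ℓ).submatrix (mulEquiv m m' h) (mulEquiv m m' h) = (cyclicP F ℓ) ^ m := by
  rw [cyclicP_pow]
  ext i j
  simp only [Matrix.submatrix_apply, cyclicP, Matrix.of_apply]
  congr 1
  show ((m' : Fin ℓ) * i = (m' : Fin ℓ) * j + 1) = (i = j + (m : Fin ℓ))
  rw [eq_iff_iff]
  constructor
  · intro he
    have h2 : (m : Fin ℓ) * ((m' : Fin ℓ) * i) = (m : Fin ℓ) * ((m' : Fin ℓ) * j + 1) :=
      congrArg ((m : Fin ℓ) * ·) he
    rw [← mul_assoc, h, one_mul, mul_add, ← mul_assoc, h, one_mul, mul_one] at h2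
    exact h2
  · intro he
    rw [he, mul_add, mul_comm (m' : Fin ℓ) (m : Fin ℓ), h]

lemma aeval_cyclicP_mod (a a' : Polynomial F) {m m' : ℕ}
    (h : ((m : Fin ℓ)) * (m' : Fin ℓ) = 1)
    (ha' : a' = (a.comp (X ^ m)) %ₘ ((X : Polynomial F) ^ ℓ - 1)) :
    aeval (cyclicP F ℓ) a' =
      (aeval (cyclicP F ℓ) a).submatrix (mulEquiv m m' h) (mulEquiv m m' h) := by
  have hmonic : Monic ((X : Polynomial F) ^ ℓ - 1) := by
    simpa using monic_X_pow_sub_C (1 : F) (NeZero.ne ℓ)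
  have hzero : aeval (cyclicP F ℓ) ((X : Polynomial F) ^ ℓ - 1) = 0 := by
    simp [map_sub, map_pow, aeval_X, cyclicP_pow_self]
  have h1 : aeval (cyclicP F ℓ) a' = aeval (cyclicP F ℓ) (a.comp (X ^ m)) := by
    conv_rhs => rw [← modByMonic_add_div (a.comp (X ^ m)) ((X : Polynomial F) ^ ℓ - 1)]
    rw [map_add, _root_.map_mul, hzero, zero_mul, add_zero, ha']
  rw [h1, aeval_comp, map_pow, aeval_X, ← cyclicP_submatrix m m' h]
  have : (cyclicP F ℓ).submatrix (mulEquiv m m' h) (mulEquiv m m' h) =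
      (Matrix.reindexAlgEquiv F F (mulEquiv m m' h).symm) (cyclicP F ℓ) := by
    simp [Matrix.reindexAlgEquiv_apply, Matrix.reindex_apply]
  rw [this, aeval_algHom_apply, Matrix.reindexAlgEquiv_apply, Matrix.reindex_apply]
  simp

lemma GBHX_submatrix (a b a' b' : Polynomial F) {m m' : ℕ}
    (h : ((m : Fin ℓ)) * (m' : Fin ℓ) = 1)
    (ha' : a' = (a.comp (X ^ m)) %ₘ ((X : Polynomial F) ^ ℓ - 1))
    (hb' : b' = (b.comp (X ^ m)) %ₘ ((X : Polynomial F) ^ ℓ - 1)) :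
    GBHX F ℓ a' b' = (GBHX F ℓ a b).submatrix (mulEquiv m m' h)
      ((mulEquiv m m' h).sumCongr (mulEquiv m m' h)) := by
  rw [GBHX, GBHX, aeval_cyclicP_mod a a' h ha', aeval_cyclicP_mod b b' h hb']
  ext i j
  cases j with
  | inl j => simp [Matrix.fromCols, Matrix.submatrix_apply]
  | inr j => simp [Matrix.fromCols, Matrix.submatrix_apply]

lemma GBHZ_submatrix (a b a' b' : Polynomial F) {m m' : ℕ}
    (h : ((m : Fin ℓ)) * (m' : Fin ℓ) = 1)
    (ha' : a' = (a.comp (X ^ m)) %ₘ ((X : Polynomial F) ^ ℓ - 1))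
    (hb' : b' = (b.comp (X ^ m)) %ₘ ((X : Polynomial F) ^ ℓ - 1)) :
    GBHZ F ℓ a' b' = (GBHZ F ℓ a b).submatrix (mulEquiv m m' h)
      ((mulEquiv m m' h).sumCongr (mulEquiv m m' h)) := by
  rw [GBHZ, GBHZ, aeval_cyclicP_mod a a' h ha', aeval_cyclicP_mod b b' h hb']
  ext i j
  cases j with
  | inl j => simp [Matrix.fromCols, Matrix.submatrix_apply, Matrix.transpose_apply]
  | inr j => simp [Matrix.fromCols, Matrix.submatrix_apply, Matrix.transpose_apply]

lemma rank_submatrix_equiv {m n m₂ n₂ : Type*} [Fintype n] [Fintype n₂]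
    (M : Matrix m n F) (e₁ : m₂ ≃ m) (e₂ : n₂ ≃ n) :
    (M.submatrix e₁ e₂).rank = M.rank := by
  rw [Matrix.rank, Matrix.rank, Matrix.mulVecLin_submatrix]
  rw [LinearMap.range_comp, LinearMap.range_comp]
  have h2 : LinearMap.range (LinearMap.funLeft F F ⇑e₂.symm) = ⊤ := by
    rw [LinearMap.range_eq_top]
    exact (LinearEquiv.funCongrLeft F F e₂.symm).surjective
  rw [h2, Submodule.map_top]
  exact LinearEquiv.finrank_map_eq (LinearEquiv.funCongrLeft F F e₁) _

lemma hWt_comp_equiv {n n' F : Type*} [Zero F] (c : n → F) (f : n' ≃ n) :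
    hWt (c ∘ f) = hWt c := by
  rw [hWt, hWt]
  have : {i | (c ∘ f) i ≠ 0} = f.symm '' {i | c i ≠ 0} := by
    ext i
    constructor
    · intro h; exact ⟨f i, h, by simp⟩
    · rintro ⟨x, hx, rfl⟩; simpa using hx
  rw [this, Set.ncard_image_of_injective _ f.symm.injective]

lemma mem_span_rows_submatrix {q q' m2 m2' : Type*} (N : Matrix m2 q F)
    (e : m2' ≃ m2) (f : q' ≃ q) (c : q' → F) :
    c ∈ Submodule.span F (Set.range fun i => (N.submatrix e f) i) ↔
      c ∘ f.symm ∈ Submodule.span F (Set.range fun i => N i) := by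
  have hrows : (Set.range fun i => (N.submatrix e f) i) =
      (LinearMap.funLeft F F f) '' (Set.range fun i => N i) := by
    ext w
    constructor
    · rintro ⟨i, rfl⟩; exact ⟨N (e i), ⟨e i, rfl⟩, rfl⟩
    · rintro ⟨v, ⟨i, rfl⟩, rfl⟩; exact ⟨e.symm i, by ext j; simp [LinearMap.funLeft]⟩
  rw [hrows, ← Submodule.map_span]
  have : (LinearMap.funLeft F F ⇑f) = (LinearEquiv.funCongrLeft F F f : (q → F) →ₗ[F] (q' → F)) :=
    rfl
  rw [this, Submodule.mem_map_equiv]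
  have hsymm : (LinearEquiv.funCongrLeft F F f).symm c = c ∘ f.symm := by
    ext j
    simp [LinearEquiv.funCongrLeft, LinearMap.funLeft]
  rw [hsymm]

lemma mulVec_submatrix_eq_zero {q q' m1 m1' : Type*} [Fintype q] [Fintype q']
    (M : Matrix m1 q F) (e : m1' ≃ m1) (f : q' ≃ q) (c : q' → F) :
    (M.submatrix e f).mulVec c = 0 ↔ M.mulVec (c ∘ f.symm) = 0 := by
  rw [Matrix.submatrix_mulVec_equiv]
  constructor
  · intro h
    funext i
    have := congrFun h (e.symm i)
    simpa using this
  · intro h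
    rw [h]
    funext i
    rfl

lemma distCSS_submatrix {q q' m1 m2 m1' m2' : Type*} [Fintype q] [Fintype q']
    (HX : Matrix m1 q F) (HZ : Matrix m2 q F) (e₁ : m1' ≃ m1) (e₂ : m2' ≃ m2) (f : q' ≃ q) :
    distCSS (HX.submatrix e₁ f) (HZ.submatrix e₂ f) = distCSS HX HZ := by
  rw [distCSS, distCSS]
  congr 1
  have h1 : {w | ∃ c : q' → F, (HX.submatrix e₁ f).mulVec c = 0 ∧
        c ∉ Submodule.span F (Set.range fun i => (HZ.submatrix e₂ f) i) ∧ w = hWt c} =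
      {w | ∃ c : q → F, HX.mulVec c = 0 ∧
        c ∉ Submodule.span F (Set.range fun i => HZ i) ∧ w = hWt c} := by
    ext w
    constructor
    · rintro ⟨c, hc1, hc2, rfl⟩
      refine ⟨c ∘ f.symm, (mulVec_submatrix_eq_zero HX e₁ f c).mp hc1, ?_, ?_⟩
      · intro hmem
        exact hc2 ((mem_span_rows_submatrix HZ e₂ f c).mpr hmem)
      · rw [hWt_comp_equiv]
    · rintro ⟨c, hc1, hc2, rfl⟩
      refine ⟨c ∘ f, ?_, ?_, ?_⟩
      · rw [mulVec_submatrix_eq_zero]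
        have : (c ∘ f) ∘ f.symm = c := by ext j; simp
        rw [this]; exact hc1
      · intro hmem
        rw [mem_span_rows_submatrix] at hmem
        have : (c ∘ f) ∘ f.symm = c := by ext j; simp
        rw [this] at hmem
        exact hc2 hmem
      · rw [hWt_comp_equiv]
  have h2 : {w | ∃ c : q' → F, (HZ.submatrix e₂ f).mulVec c = 0 ∧
        c ∉ Submodule.span F (Set.range fun i => (HX.submatrix e₁ f) i) ∧ w = hWt c} =
      {w | ∃ c : q → F, HZ.mulVec c = 0 ∧
        c ∉ Submodule.span F (Set.range fun i => HX i) ∧ w = hWt c} := by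
    ext w
    constructor
    · rintro ⟨c, hc1, hc2, rfl⟩
      refine ⟨c ∘ f.symm, (mulVec_submatrix_eq_zero HZ e₂ f c).mp hc1, ?_, ?_⟩
      · intro hmem
        exact hc2 ((mem_span_rows_submatrix HX e₁ f c).mpr hmem)
      · rw [hWt_comp_equiv]
    · rintro ⟨c, hc1, hc2, rfl⟩
      refine ⟨c ∘ f, ?_, ?_, ?_⟩
      · rw [mulVec_submatrix_eq_zero]
        have : (c ∘ f) ∘ f.symm = c := by ext j; simp
        rw [this]; exact hc1
      · intro hmem
        rw [mem_span_rows_submatrix] at hmem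
        have : (c ∘ f) ∘ f.symm = c := by ext j; simp
        rw [this] at hmem
        exact hc2 hmem
      · rw [hWt_comp_equiv]
  rw [h1, h2]

end Aux

/-- For `m` coprime to `ℓ`, the substitution `x ↦ x^m` induces a ring automorphism of
`F_q[x]/(x^ℓ - 1)`; consequently `GB(a,b)` and `GB(a(x^m), b(x^m))` (reduced mod
`x^ℓ - 1`) have equal dimension and equal minimum distance. -/
theorem stmt_14 (F : Type*) [Field F] [Fintype F] (ℓ : ℕ) [NeZero ℓ] (m : ℕ)
    (hm : Nat.Coprime m ℓ) (a b a' b' : Polynomial F)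
    (ha' : a' = (a.comp (X ^ m)) %ₘ ((X : Polynomial F) ^ ℓ - 1))
    (hb' : b' = (b.comp (X ^ m)) %ₘ ((X : Polynomial F) ^ ℓ - 1)) :
    (∃ σ : (Polynomial F ⧸ Ideal.span {(X : Polynomial F) ^ ℓ - 1}) ≃+*
        (Polynomial F ⧸ Ideal.span {(X : Polynomial F) ^ ℓ - 1}),
      ∀ p : Polynomial F,
        σ (Ideal.Quotient.mk (Ideal.span {(X : Polynomial F) ^ ℓ - 1}) p) =
          Ideal.Quotient.mk (Ideal.span {(X : Polynomial F) ^ ℓ - 1}) (p.comp (X ^ m))) ∧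
    gbDim F ℓ a b = gbDim F ℓ a' b' ∧ gbDist F ℓ a b = gbDist F ℓ a' b' := by
  obtain ⟨σ, hσ⟩ := exists_sigma F ℓ m hm
  have hφ : 1 ≤ Nat.totient ℓ := Nat.totient_pos.mpr (Nat.pos_of_ne_zero (NeZero.ne ℓ))
  set m' := m ^ (Nat.totient ℓ - 1) with hm'def
  have hmm' : m * m' ≡ 1 [MOD ℓ] := by
    have : m * m' = m ^ Nat.totient ℓ := by
      rw [hm'def, ← pow_succ']
      congr 1
      omega
    rw [this]
    exact Nat.ModEq.pow_totient hm
  have h : ((m : Fin ℓ)) * (m' : Fin ℓ) = 1 := by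
    have := fin_cast_eq_of_modEq hmm'
    rw [show ((m * m' : ℕ) : Fin ℓ) = (m : Fin ℓ) * (m' : Fin ℓ) from Fin.ext (by
      rw [Fin.val_mul, Fin.val_natCast, Fin.val_natCast, Fin.val_natCast, Nat.mul_mod])] at this
    simpa using this
  refine ⟨⟨σ, hσ⟩, ?_, ?_⟩
  · rw [gbDim, gbDim, GBHX_submatrix a b a' b' h ha' hb', GBHZ_submatrix a b a' b' h ha' hb',
      rank_submatrix_equiv, rank_submatrix_equiv]
  · rw [gbDist, gbDist, GBHX_submatrix a b a' b' h ha' hb', GBHZ_submatrix a b a' b' h ha' hb',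
      distCSS_submatrix]
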